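/- The Hindman ideal H = {A ⊆ ω : for every infinite B ⊆ ω, FS(B) ⊄ A}, where FS(B) = {∑_{n∈F} n : F a finite nonempty subset of B}, is homogeneous. -/

import Mathlib

open Set Filter

/-- `I` is an ideal on the countable set `X`: closed under subsets and finite
unions, contains all finite sets, and does not contain the whole set. -/
def IsIdeal {X : Type*} (I : Set (Set X)) : Prop :=
  (∀ A B : Set X, A ∈ I → B ⊆ A → B ∈ I) ∧
  (∀ A B : Set X, A ∈ I → B ∈ I → A ∪ B ∈ I) ∧
  (∀ A : Set X, A.Finite → A ∈ I) ∧
  (Set.univ : Set X) ∉ I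

/-- The restriction `I|A = {B ∩ A : B ∈ I}`. -/
def restr {X : Type*} (I : Set (Set X)) (A : Set X) : Set (Set X) :=
  {C | ∃ B ∈ I, C = B ∩ A}

/-- `I|A ≅ I|B`: there is a bijection `f : B → A` such that for every
`C ⊆ A`, `C ∈ I|A ↔ f⁻¹[C] ∈ I|B`. -/
def RIso {X : Type*} (I : Set (Set X)) (A B : Set X) : Prop :=
  ∃ f : X → X, Set.BijOn f B A ∧
    ∀ C : Set X, C ⊆ A → (C ∈ restr I A ↔ B ∩ f ⁻¹' C ∈ restr I B)

/-- The homogeneity family `H(I) = {A : I|A ≅ I}`. -/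
def HF {X : Type*} (I : Set (Set X)) : Set (Set X) := {A | RIso I A Set.univ}

/-- `I` is homogeneous if `H(I) = I⁺`. -/
def HomogIdeal {X : Type*} (I : Set (Set X)) : Prop := HF I = {A | A ∉ I}

/-- `I` is anti-homogeneous if `H(I) = I*`. -/
def AntiHomogIdeal {X : Type*} (I : Set (Set X)) : Prop := HF I = {A | Aᶜ ∈ I}

/-- `I ≅ J`: a bijection `f` of underlying sets with `A ∈ I ↔ f⁻¹[A] ∈ J`. -/
def Isomorphic {X Y : Type*} (I : Set (Set X)) (J : Set (Set Y)) : Prop :=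
  ∃ f : Y → X, Function.Bijective f ∧ ∀ A : Set X, A ∈ I ↔ f ⁻¹' A ∈ J

/-- The ideal `Fin ⊕ P(ω)` on `{0,1} × ω` (here `Bool × ℕ`, `true` playing the
role of `1`): all sets `A` with `{n : (1,n) ∈ A}` finite. -/
def FinOplusAll : Set (Set (Bool × ℕ)) := {A | {n : ℕ | (true, n) ∈ A}.Finite}

/-- An ideal on `ω` is admissible if it is not isomorphic to `Fin ⊕ P(ω)`. -/
def Admissible (I : Set (Set ℕ)) : Prop := ¬ Isomorphic I FinOplusAll

/-- An injection `f` is bi-`I`-invariant if `f[A] ∈ I ↔ A ∈ I` for all `A`. -/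
def BiInvariant {X : Type*} (I : Set (Set X)) (f : X → X) : Prop :=
  Function.Injective f ∧ ∀ A : Set X, f '' A ∈ I ↔ A ∈ I

/-- The set of fixed points of `f`. -/
def fixedSet {X : Type*} (f : X → X) : Set X := {x | f x = x}

/-- `I` is a maximal ideal. -/
def MaximalIdeal {X : Type*} (I : Set (Set X)) : Prop :=
  IsIdeal I ∧ ∀ A : Set X, A ∈ I ∨ Aᶜ ∈ I

/-- `FS(B)`: all sums of finite nonempty subsets of `B`. -/
def FS (B : Set ℕ) : Set ℕ :=
  {m | ∃ F : Finset ℕ, ↑F ⊆ B ∧ F.Nonempty ∧ ∑ n ∈ F, n = m}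

/-- The Hindman ideal. -/
def HindmanIdeal : Set (Set ℕ) :=
  {A | ∀ B : Set ℕ, B.Infinite → ¬ FS B ⊆ A}

/-- sum of `d` over a finset -/
def sig (d : ℕ → ℕ) (F : Finset ℕ) : ℕ := ∑ i ∈ F, d i

lemma sig_le_of_subset {d : ℕ → ℕ} {F : Finset ℕ} {n : ℕ} (h : F ⊆ Finset.range n) :
    sig d F ≤ sig d (Finset.range n) :=
  Finset.sum_le_sum_of_subset h

lemma subset_range_of_all {F : Finset ℕ} {n : ℕ} (h : ∀ i ∈ F, i < n) : F ⊆ Finset.range n :=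
  fun i hi => Finset.mem_range.mpr (h i hi)

/-- uniqueness of representation for superincreasing `d` -/
lemma sig_inj_aux {d : ℕ → ℕ} (hd : ∀ k, sig d (Finset.range k) < d k) :
    ∀ n, ∀ F G : Finset ℕ, F ⊆ Finset.range n → G ⊆ Finset.range n →
      sig d F = sig d G → F = G := by
  intro n
  induction n with
  | zero => intro F G hF hG _; simp only [Finset.range_zero, Finset.subset_empty] at hF hG; rw [hF, hG]
  | succ n ih =>
    intro F G hF hG hs
    have hFe : F.erase n ⊆ Finset.range n := by
      intro i hi
      have := hF (Finset.mem_of_mem_erase hi)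
      have hne := Finset.ne_of_mem_erase hi
      simp only [Finset.mem_range] at this ⊢; omega
    have hGe : G.erase n ⊆ Finset.range n := by
      intro i hi
      have := hG (Finset.mem_of_mem_erase hi)
      have hne := Finset.ne_of_mem_erase hi
      simp only [Finset.mem_range] at this ⊢; omega
    have hsplitF : sig d F = (if n ∈ F then d n else 0) + sig d (F.erase n) := by
      by_cases h : n ∈ F
      · simp only [h, if_true, sig]
        exact (Finset.add_sum_erase _ _ h).symm
      · simp only [h, if_false, sig, Finset.erase_eq_of_notMem h, zero_add]
    have hsplitG : sig d G = (if n ∈ G then d n else 0) + sig d (G.erase n) := by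
      by_cases h : n ∈ G
      · simp only [h, if_true, sig]
        exact (Finset.add_sum_erase _ _ h).symm
      · simp only [h, if_false, sig, Finset.erase_eq_of_notMem h, zero_add]
    have hbF : sig d (F.erase n) ≤ sig d (Finset.range n) := sig_le_of_subset hFe
    have hbG : sig d (G.erase n) ≤ sig d (Finset.range n) := sig_le_of_subset hGe
    have hdn := hd n
    by_cases h1 : n ∈ F <;> by_cases h2 : n ∈ G
    · have : sig d (F.erase n) = sig d (G.erase n) := by
        rw [hsplitF, hsplitG] at hs; simp only [h1, h2, if_true] at hs; omega
      have heq := ih _ _ hFe hGe this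
      have : F = insert n (F.erase n) := (Finset.insert_erase h1).symm
      rw [this, heq, Finset.insert_erase h2]
    · exfalso; rw [hsplitF, hsplitG] at hs; simp only [h1, h2, if_true, if_false, zero_add] at hs
      omega
    · exfalso; rw [hsplitF, hsplitG] at hs; simp only [h1, h2, if_true, if_false, zero_add] at hs
      omega
    · have : sig d (F.erase n) = sig d (G.erase n) := by
        rw [hsplitF, hsplitG] at hs; simp only [h1, h2, if_false, zero_add] at hs; exact hs
      have heq := ih _ _ hFe hGe this
      rwa [Finset.erase_eq_of_notMem h1, Finset.erase_eq_of_notMem h2] at heq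

lemma sig_inj {d : ℕ → ℕ} (hd : ∀ k, sig d (Finset.range k) < d k)
    {F G : Finset ℕ} (h : sig d F = sig d G) : F = G := by
  classical
  set n := (F ∪ G).sup id + 1 with hn
  have hF : F ⊆ Finset.range n := by
    intro i hi; simp only [Finset.mem_range, hn]
    have : i ≤ (F ∪ G).sup id := Finset.le_sup (f := id) (Finset.mem_union_left _ hi)
    omega
  have hG : G ⊆ Finset.range n := by
    intro i hi; simp only [Finset.mem_range, hn]
    have : i ≤ (F ∪ G).sup id := Finset.le_sup (f := id) (Finset.mem_union_right _ hi)
    omega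
  exact sig_inj_aux hd n F G hF hG h

/-- key uniqueness for doubly-superincreasing `d`: coefficient-2 version, nested form -/
lemma sig_two_aux {d : ℕ → ℕ} (hd : ∀ k, 2 * sig d (Finset.range k) < d k) :
    ∀ n, ∀ X Y H : Finset ℕ, X ⊆ Finset.range n → Y ⊆ Finset.range n → H ⊆ Finset.range n →
      Y ⊆ X → sig d X + sig d Y = sig d H → Y = ∅ ∧ H = X := by
  intro n
  induction n with
  | zero =>
    intro X Y H hX hY hH _ _
    simp only [Finset.range_zero, Finset.subset_empty] at hX hY hH
    exact ⟨hY, by rw [hH, hX]⟩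
  | succ n ih =>
    intro X Y H hX hY hH hYX hs
    classical
    have era : ∀ S : Finset ℕ, S ⊆ Finset.range (n+1) → S.erase n ⊆ Finset.range n := by
      intro S hS i hi
      have := hS (Finset.mem_of_mem_erase hi)
      have hne := Finset.ne_of_mem_erase hi
      simp only [Finset.mem_range] at this ⊢; omega
    have hXe := era X hX; have hYe := era Y hY; have hHe := era H hH
    have split : ∀ S : Finset ℕ, sig d S = (if n ∈ S then d n else 0) + sig d (S.erase n) := by
      intro S
      by_cases h : n ∈ S
      · simp only [h, if_true, sig]; exact (Finset.add_sum_erase _ _ h).symm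
      · simp only [h, if_false, sig, Finset.erase_eq_of_notMem h, zero_add]
    have hbX : sig d (X.erase n) ≤ sig d (Finset.range n) := sig_le_of_subset hXe
    have hbY : sig d (Y.erase n) ≤ sig d (Finset.range n) := sig_le_of_subset hYe
    have hbH : sig d (H.erase n) ≤ sig d (Finset.range n) := sig_le_of_subset hHe
    have hdn := hd n
    have hYXe : Y.erase n ⊆ X.erase n := Finset.erase_subset_erase _ hYX
    rw [split X, split Y, split H] at hs
    by_cases h1 : n ∈ X <;> by_cases h2 : n ∈ Y <;> by_cases h3 : n ∈ H <;>
      simp only [h1, h2, h3, if_true, if_false, zero_add] at hs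
    · omega
    · omega
    · -- n ∈ X, n ∉ Y, n ∈ H
      have hs' : sig d (X.erase n) + sig d (Y.erase n) = sig d (H.erase n) := by omega
      obtain ⟨hY0, hHX⟩ := ih _ _ _ hXe hYe hHe hYXe hs'
      constructor
      · rwa [Finset.erase_eq_of_notMem h2] at hY0
      · have : H = insert n (H.erase n) := (Finset.insert_erase h3).symm
        rw [this, hHX, Finset.insert_erase h1]
    · omega
    · exact absurd (hYX h2) h1
    · exact absurd (hYX h2) h1
    · omega
    · -- none
      have hs' : sig d (X.erase n) + sig d (Y.erase n) = sig d (H.erase n) := hs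
      obtain ⟨hY0, hHX⟩ := ih _ _ _ hXe hYe hHe hYXe hs'
      rw [Finset.erase_eq_of_notMem h2] at hY0
      rw [Finset.erase_eq_of_notMem h3, Finset.erase_eq_of_notMem h1] at hHX
      exact ⟨hY0, hHX⟩

lemma sig_two {d : ℕ → ℕ} (hd : ∀ k, 2 * sig d (Finset.range k) < d k)
    {F G H : Finset ℕ} (h : sig d F + sig d G = sig d H) :
    F ∩ G = ∅ ∧ H = F ∪ G := by
  classical
  have key : sig d (F ∪ G) + sig d (F ∩ G) = sig d H := by
    rw [← h]; exact Finset.sum_union_inter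
  set n := (F ∪ G ∪ H).sup id + 1 with hn
  have hsub : ∀ S : Finset ℕ, S ⊆ F ∪ G ∪ H → S ⊆ Finset.range n := by
    intro S hS i hi
    simp only [Finset.mem_range, hn]
    have : i ≤ (F ∪ G ∪ H).sup id := Finset.le_sup (f := id) (hS hi)
    omega
  have h1 : F ∪ G ⊆ Finset.range n := hsub _ Finset.subset_union_left
  have h2 : F ∩ G ⊆ Finset.range n := by
    apply hsub
    exact (Finset.inter_subset_left).trans ((Finset.subset_union_left).trans Finset.subset_union_left)
  have h3 : H ⊆ Finset.range n := hsub _ Finset.subset_union_right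
  have hYX : F ∩ G ⊆ F ∪ G := (Finset.inter_subset_left).trans Finset.subset_union_left
  obtain ⟨he, hu⟩ := sig_two_aux hd n (F ∪ G) (F ∩ G) H h1 h2 h3 hYX key
  exact ⟨he, hu⟩

def pow2 : ℕ → ℕ := fun i => 2 ^ i

lemma sum_pow2_range (k : ℕ) : sig pow2 (Finset.range k) + 1 = 2 ^ k := by
  induction k with
  | zero => simp [sig, pow2]
  | succ k ih =>
    rw [sig, Finset.sum_range_succ, ← sig]
    have : (2:ℕ) ^ (k+1) = 2^k + 2^k := by ring
    simp only [pow2] at ih ⊢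
    omega

lemma pow2_super : ∀ k, sig pow2 (Finset.range k) < pow2 k := by
  intro k; have := sum_pow2_range k; simp only [pow2] at *; omega

lemma exists_bits : ∀ n : ℕ, ∃ F : Finset ℕ, sig pow2 F = n := by
  intro n
  induction n using Nat.strong_induction_on with
  | _ n ih =>
    rcases Nat.eq_zero_or_pos n with h0 | hpos
    · exact ⟨∅, by simp [sig, h0]⟩
    · set k := Nat.log 2 n with hk
      have h2k : 2 ^ k ≤ n := Nat.pow_log_le_self 2 (by omega)
      have hlt : n < 2 ^ (k + 1) := Nat.lt_pow_succ_log_self (by norm_num) n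
      set m := n - 2 ^ k with hm
      have hmlt : m < n := by have : 0 < 2^k := Nat.pow_pos (by norm_num); omega
      obtain ⟨F, hF⟩ := ih m hmlt
      have hFk : k ∉ F := by
        intro hmem
        have : pow2 k ≤ sig pow2 F := Finset.single_le_sum (f := pow2) (fun i _ => Nat.zero_le _) hmem
        simp only [pow2] at this
        have h2 : (2:ℕ)^(k+1) = 2^k + 2^k := by ring
        omega
      refine ⟨insert k F, ?_⟩
      rw [sig, Finset.sum_insert hFk, ← sig, hF]
      simp only [pow2]; omega

noncomputable def bits (n : ℕ) : Finset ℕ := Classical.choose (exists_bits n)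

lemma sig_bits (n : ℕ) : sig pow2 (bits n) = n := Classical.choose_spec (exists_bits n)

lemma bits_eq {F : Finset ℕ} {n : ℕ} (h : sig pow2 F = n) : bits n = F :=
  sig_inj pow2_super (by rw [sig_bits n, ← h])

lemma bits_nonempty {n : ℕ} (h : 0 < n) : (bits n).Nonempty := by
  rcases Finset.eq_empty_or_nonempty (bits n) with he | hne
  · exfalso; have := sig_bits n; rw [he] at this; simp [sig] at this; omega
  · exact hne

lemma bits_shift (t M : ℕ) : bits (2 ^ M * t) = (bits t).image (· + M) := by
  apply bits_eq
  rw [sig, Finset.sum_image (by intro a _ b _ h; simp only at h; omega)]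
  have : ∀ i ∈ bits t, pow2 (i + M) = 2 ^ M * pow2 i := by
    intro i _; simp [pow2, pow_add]; ring
  rw [Finset.sum_congr rfl this, ← Finset.mul_sum, ← sig, sig_bits]

-- chain recursion
noncomputable def chainSeq {S : Type*} (R : S → S → Prop) (h : ∀ s, ∃ t, R s t) (s0 : S) : ℕ → S
  | 0 => s0
  | k+1 => Classical.choose (h (chainSeq R h s0 k))

lemma chainSeq_spec {S : Type*} (R : S → S → Prop) (h : ∀ s, ∃ t, R s t) (s0 : S) (k : ℕ) :
    R (chainSeq R h s0 k) (chainSeq R h s0 (k+1)) := Classical.choose_spec (h _)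

-- basic FS lemmas
lemma FS_mono {B B' : Set ℕ} (h : B ⊆ B') : FS B ⊆ FS B' := by
  rintro m ⟨F, hF, hne, hsum⟩
  exact ⟨F, hF.trans h, hne, hsum⟩

lemma subset_FS (B : Set ℕ) : B ⊆ FS B := by
  intro b hb
  exact ⟨{b}, by simpa using hb, Finset.singleton_nonempty b, by simp⟩

lemma hindman_sub {A A' : Set ℕ} (hA : A ∈ HindmanIdeal) (h : A' ⊆ A) : A' ∈ HindmanIdeal :=
  fun B hB hFS => hA B hB (hFS.trans h)

lemma not_mem_hindman_iff {A : Set ℕ} :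
    A ∉ HindmanIdeal ↔ ∃ B : Set ℕ, B.Infinite ∧ FS B ⊆ A := by
  simp only [HindmanIdeal, Set.mem_setOf_eq]
  push_neg
  rfl

lemma hindman_finite {A : Set ℕ} (h : A.Finite) : A ∈ HindmanIdeal := by
  intro B hB hFS
  exact (hB.mono ((subset_FS B).trans hFS)) h

lemma hindman_univ : (Set.univ : Set ℕ) ∉ HindmanIdeal := by
  rw [not_mem_hindman_iff]
  exact ⟨Set.univ, Set.infinite_univ, fun x _ => trivial⟩

lemma finset_pullback {x : ℕ → ℕ} (hinj : Function.Injective x) (V : Finset ℕ)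
    (hV : ↑V ⊆ Set.range x) : ∃ K : Finset ℕ, K.image x = V ∧ (V.Nonempty → K.Nonempty) := by
  classical
  refine ⟨V.image (Function.invFun x), ?_, ?_⟩
  · rw [Finset.image_image]
    have : ∀ v ∈ V, (x ∘ Function.invFun x) v = v := by
      intro v hv
      exact Function.invFun_eq (hV hv)
    calc V.image (x ∘ Function.invFun x) = V.image id := Finset.image_congr this
      _ = V := Finset.image_id
  · intro h; exact h.image _

-- stream lemmas
lemma stream_FS_exists_finset {a : Stream' ℕ} {m : ℕ} (hm : m ∈ Hindman.FS a) :
    ∃ K : Finset ℕ, K.Nonempty ∧ ∑ i ∈ K, a.get i = m := by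
  induction hm with
  | head' a => exact ⟨{0}, Finset.singleton_nonempty 0, by simp only [Finset.sum_singleton]⟩
  | tail' a m h ih =>
    obtain ⟨K, hne, hsum⟩ := ih
    refine ⟨K.image (· + 1), hne.image _, ?_⟩
    rw [Finset.sum_image (by intro x _ y _ h; simp only at h; omega)]
    exact hsum
  | cons' a m h ih =>
    obtain ⟨K, hne, hsum⟩ := ih
    have h0 : 0 ∉ K.image (· + 1) := by simp
    refine ⟨insert 0 (K.image (· + 1)), Finset.insert_nonempty _ _, ?_⟩
    rw [Finset.sum_insert h0, Finset.sum_image (by intro x _ y _ h; simp only at h; omega)]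
    have h2 : ∑ x ∈ K, a.get (x+1) = m := hsum
    rw [h2]

lemma stream_FS_subset_FS {a : Stream' ℕ} {B : Set ℕ} (hmem : ∀ i, a.get i ∈ B)
    (hinj : Function.Injective a) : Hindman.FS a ⊆ FS B := by
  intro m hm
  obtain ⟨K, hne, hsum⟩ := stream_FS_exists_finset hm
  refine ⟨K.image a, ?_, hne.image _, ?_⟩
  · intro x hx
    simp only [Finset.coe_image, Set.mem_image, Finset.mem_coe] at hx
    obtain ⟨i, _, rfl⟩ := Finset.mem_image.mp hx
    exact hmem i
  · rw [Finset.sum_image (fun x _ y _ h => hinj h)]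
    exact hsum

-- block sums of a positive stream contain FS of an infinite set
lemma stream_to_set {b : Stream' ℕ} (hpos : ∀ i, 0 < b.get i) :
    ∃ X : Set ℕ, X.Infinite ∧ FS X ⊆ Hindman.FS b := by
  classical
  -- cut points
  let m : ℕ → ℕ := fun k => Nat.rec 0 (fun _ mk => mk + (∑ i ∈ Finset.range mk, b.get i) + 1) k
  have hm : ∀ k, m (k+1) = m k + (∑ i ∈ Finset.range (m k), b.get i) + 1 := fun k => rfl
  have hmlt : ∀ k, m k < m (k+1) := by intro k; rw [hm]; omega
  have hmmono : StrictMono m := strictMono_nat_of_lt_succ hmlt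
  let I : ℕ → Finset ℕ := fun k => Finset.Ico (m k) (m (k+1))
  let x : ℕ → ℕ := fun k => ∑ i ∈ I k, b.get i
  have hxlt : ∀ k, x k < x (k+1) := by
    intro k
    have hcard : (I (k+1)).card = m (k+2) - m (k+1) := Nat.card_Ico _ _
    have hcard2 : (I (k+1)).card = (∑ i ∈ Finset.range (m (k+1)), b.get i) + 1 := by
      rw [hcard, hm (k+1)]; omega
    have hge : (I (k+1)).card ≤ x (k+1) := by
      have := Finset.card_nsmul_le_sum (I (k+1)) (fun i => b.get i) 1 (fun i _ => hpos i)
      simpa using this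
    have hsub : I k ⊆ Finset.range (m (k+1)) := by
      intro i hi; simp only [I, Finset.mem_Ico] at hi; simp only [Finset.mem_range]; omega
    have hle : x k ≤ ∑ i ∈ Finset.range (m (k+1)), b.get i :=
      Finset.sum_le_sum_of_subset hsub
    omega
  have hxmono : StrictMono x := strictMono_nat_of_lt_succ hxlt
  refine ⟨Set.range x, Set.infinite_range_of_injective hxmono.injective, ?_⟩
  rintro v ⟨V, hVsub, hVne, hVsum⟩
  obtain ⟨K, hKimg, hKne⟩ := finset_pullback hxmono.injective V hVsub
  have hKne' := hKne hVne
  have hIdisj : (↑K : Set ℕ).PairwiseDisjoint I := by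
    intro j _ k _ hjk
    apply Finset.disjoint_left.mpr
    intro i hij hik
    simp only [I, Finset.mem_Ico] at hij hik
    rcases Nat.lt_or_ge j k with h | h
    · have := hmmono.monotone (show j + 1 ≤ k by omega); omega
    · have := hmmono.monotone (show k + 1 ≤ j by omega); omega
  have hsum2 : v = ∑ i ∈ K.biUnion I, b.get i := by
    rw [Finset.sum_biUnion hIdisj, ← hVsum, ← hKimg,
      Finset.sum_image (fun p _ q _ h => hxmono.injective h)]
  rw [hsum2]
  apply Hindman.FS.finset_sum
  obtain ⟨k, hk⟩ := hKne'
  exact ⟨m k, Finset.mem_biUnion.mpr ⟨k, hk, Finset.mem_Ico.mpr ⟨le_refl _, hmlt k⟩⟩⟩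

lemma FS_pos {B : Set ℕ} (hB : ∀ x ∈ B, 0 < x) {m : ℕ} (hm : m ∈ FS B) : 0 < m := by
  obtain ⟨F, hF, ⟨y, hy⟩, hsum⟩ := hm
  have h1 : 0 < y := hB y (hF hy)
  have : y ≤ ∑ n ∈ F, n := Finset.single_le_sum (fun i _ => Nat.zero_le i) hy
  omega


lemma hindman_union {A A' : Set ℕ} (hA : A ∈ HindmanIdeal) (hA' : A' ∈ HindmanIdeal) :
    A ∪ A' ∈ HindmanIdeal := by
  by_contra hU
  obtain ⟨B, hBinf, hBFS⟩ := not_mem_hindman_iff.mp hU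
  set B' : Set ℕ := B \ {0} with hB'
  have hB'inf : B'.Infinite := hBinf.diff (Set.finite_singleton 0)
  have hB'pos : ∀ x ∈ B', 0 < x := by
    rintro x ⟨_, hx0⟩
    simp only [Set.mem_singleton_iff] at hx0; omega
  have hsetOf : {n | n ∈ B'} = B' := rfl
  have hinf' : {n | n ∈ B'}.Infinite := by rw [hsetOf]; exact hB'inf
  set a : Stream' ℕ := (Nat.nth (· ∈ B') : ℕ → ℕ) with ha
  have hamem : ∀ i, a.get i ∈ B' := fun i => Nat.nth_mem_of_infinite hinf' i
  have hainj : Function.Injective a := (Nat.nth_strictMono hinf').injective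
  have haFS : Hindman.FS a ⊆ FS B' := stream_FS_subset_FS hamem hainj
  have hcov : Hindman.FS a ⊆ ⋃₀ {A ∩ Hindman.FS a, A' ∩ Hindman.FS a} := by
    intro m hm
    have : m ∈ A ∪ A' := hBFS (FS_mono (Set.diff_subset) (haFS hm))
    rcases this with h | h
    · exact ⟨A ∩ Hindman.FS a, by simp, h, hm⟩
    · exact ⟨A' ∩ Hindman.FS a, by simp, h, hm⟩
  obtain ⟨c, hc, b, hbFS⟩ := Hindman.FS_partition_regular a _
    ((Set.finite_singleton _).insert _) hcov
  have hbpos : ∀ i, 0 < b.get i := by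
    intro i
    have hmem : b.get i ∈ Hindman.FS b := Hindman.FS.singleton b i
    have : b.get i ∈ c := hbFS hmem
    have hFSa : b.get i ∈ Hindman.FS a := by
      rcases hc with rfl | hc
      · exact this.2
      · simp only [Set.mem_singleton_iff] at hc; rw [hc] at this; exact this.2
    exact FS_pos hB'pos (haFS hFSa)
  obtain ⟨X, hXinf, hXFS⟩ := stream_to_set hbpos
  rcases hc with rfl | hc
  · exact hA X hXinf (fun v hv => (hbFS (hXFS hv)).1)
  · simp only [Set.mem_singleton_iff] at hc
    subst hc
    exact hA' X hXinf (fun v hv => (hbFS (hXFS hv)).1)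

/-- extraction of a doubly-superincreasing sequence from an infinite set -/
lemma exists_sparse_seq {B : Set ℕ} (hB : B.Infinite) :
    ∃ c : ℕ → ℕ, StrictMono c ∧ (∀ k, c k ∈ B) ∧ 0 < c 0 ∧
      ∀ k, 2 * sig c (Finset.range (k+1)) < c (k+1) := by
  classical
  set R : (ℕ × ℕ) → (ℕ × ℕ) → Prop :=
    fun s t => t.1 ∈ B ∧ s.1 < t.1 ∧ 2 * s.2 < t.1 ∧ t.2 = s.2 + t.1 with hR
  have hex : ∀ s, ∃ t, R s t := by
    intro s
    obtain ⟨x, hxB, hx⟩ := hB.exists_gt (max s.1 (2 * s.2))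
    exact ⟨(x, s.2 + x), hxB, by omega, by omega, rfl⟩
  obtain ⟨x0, hx0B, hx0⟩ := hB.exists_gt 0
  set sq := chainSeq R hex (x0, x0) with hsq
  have hspec := chainSeq_spec R hex (x0, x0)
  set c : ℕ → ℕ := fun k => (sq k).1 with hc
  have hsum : ∀ k, (sq k).2 = sig c (Finset.range (k+1)) := by
    intro k
    induction k with
    | zero => simp [sig, hsq, hc, chainSeq]
    | succ k ih =>
      have := (hspec k).2.2.2
      rw [sig, Finset.sum_range_succ, ← sig, ← ih, this]
  refine ⟨c, strictMono_nat_of_lt_succ (fun k => (hspec k).2.1), ?_, ?_, ?_⟩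
  · intro k
    cases k with
    | zero => exact hx0B
    | succ k => exact (hspec k).1
  · exact hx0
  · intro k
    have h2 := (hspec k).2.2.1
    rw [hsum k] at h2
    exact h2



noncomputable def dd (c : ℕ → ℕ) : ℕ → ℕ := fun i => c (i + 1)

lemma dd_super {c : ℕ → ℕ} (hsparse : ∀ k, 2 * sig c (Finset.range (k+1)) < c (k+1)) :
    ∀ k, 2 * sig (dd c) (Finset.range k) < dd c k := by
  intro k
  have h1 : sig c (Finset.range (k+1)) = sig (dd c) (Finset.range k) + c 0 := by
    simp only [sig, dd]
    exact Finset.sum_range_succ' c k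
  have := hsparse k
  simp only [dd]
  omega

lemma dd_super1 {c : ℕ → ℕ} (hsparse : ∀ k, 2 * sig c (Finset.range (k+1)) < c (k+1)) :
    ∀ k, sig (dd c) (Finset.range k) < dd c k := by
  intro k; have := dd_super hsparse k; omega

noncomputable def psi (c : ℕ → ℕ) : ℕ → ℕ := fun n => sig (dd c) (bits n)

/-- pigeonhole: block of an infinite set beyond N with sum divisible by 2^M -/
lemma exists_block {F : Set ℕ} (hF : F.Infinite) (N M : ℕ) :
    ∃ G : Finset ℕ, ↑G ⊆ F ∧ G.Nonempty ∧ (∀ i ∈ G, N < i) ∧ 2^M ∣ ∑ i ∈ G, i := by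
  classical
  set F' : Set ℕ := F \ {x | x ≤ N} with hF'
  have hF'inf : F'.Infinite := hF.diff (Set.finite_Iic N)
  have hsetOf : {n | n ∈ F'}.Infinite := hF'inf
  set e : ℕ → ℕ := Nat.nth (· ∈ F') with he
  have hemem : ∀ i, e i ∈ F' := fun i => Nat.nth_mem_of_infinite hsetOf i
  have heinj : Function.Injective e := (Nat.nth_strictMono hsetOf).injective
  set p : ℕ → ℕ := fun j => ∑ i ∈ Finset.range j, e i with hp
  have h2M : 0 < 2^M := Nat.pow_pos (by norm_num)
  have hmaps : ∀ j ∈ Finset.range (2^M + 1), p j % 2^M ∈ Finset.range (2^M) := by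
    intro j _; exact Finset.mem_range.mpr (Nat.mod_lt _ h2M)
  obtain ⟨j1, hj1, j2, hj2, hne, heq⟩ :=
    Finset.exists_ne_map_eq_of_card_lt_of_maps_to
      (by simp [Finset.card_range]) hmaps
  -- wlog j1 < j2
  obtain ⟨a, b, hab, habeq⟩ : ∃ a b, a < b ∧ p a % 2^M = p b % 2^M := by
    rcases Nat.lt_or_ge j1 j2 with h | h
    · exact ⟨j1, j2, h, heq⟩
    · exact ⟨j2, j1, by omega, heq.symm⟩
  refine ⟨(Finset.Ico a b).image e, ?_, ?_, ?_, ?_⟩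
  · intro x hx
    simp only [Finset.coe_image, Set.mem_image, Finset.mem_coe] at hx
    obtain ⟨i, _, rfl⟩ := hx
    exact (hemem i).1
  · exact (Finset.nonempty_Ico.mpr hab).image e
  · intro x hx
    simp only [Finset.mem_image] at hx
    obtain ⟨i, _, rfl⟩ := hx
    have := (hemem i).2
    simp only [Set.mem_setOf_eq] at this
    omega
  · have hsum : ∑ x ∈ (Finset.Ico a b).image e, x = ∑ i ∈ Finset.Ico a b, e i :=
      Finset.sum_image (fun x _ y _ h => heinj h)
    have hconsec : ∑ i ∈ Finset.Ico 0 a, e i + ∑ i ∈ Finset.Ico a b, e i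
        = ∑ i ∈ Finset.Ico 0 b, e i :=
      Finset.sum_Ico_consecutive _ (Nat.zero_le a) (le_of_lt hab)
    have hpa : p a = ∑ i ∈ Finset.Ico 0 a, e i := by rw [← Finset.range_eq_Ico]
    have hpb : p b = ∑ i ∈ Finset.Ico 0 b, e i := by rw [← Finset.range_eq_Ico]
    have hple : p a ≤ p b := by omega
    have hdvd : 2^M ∣ p b - p a := (Nat.modEq_iff_dvd' hple).mp habeq
    have : ∑ i ∈ Finset.Ico a b, e i = p b - p a := by omega
    rw [hsum, this]
    exact hdvd

structure BDS where
  G : Finset ℕ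
  β : Finset ℕ
  gc : ℕ
  mc : ℕ

variable {c : ℕ → ℕ}

section BD


/-- Direction (I): images of non-Hindman-small sets under psi contain FS sets. -/
lemma psi_image_large (hdd1 : ∀ k, sig (dd c) (Finset.range k) < dd c k)
    {E F : Set ℕ} (hFinf : F.Infinite) (hFS : FS F ⊆ E) :
    ∃ W : Set ℕ, W.Infinite ∧ FS W ⊆ psi c '' E := by
  classical
  set R : BDS → BDS → Prop := fun s t =>
    ↑t.G ⊆ F ∧ t.G.Nonempty ∧ (∀ i ∈ t.G, s.gc < i ∧ i ≤ t.gc) ∧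
    sig pow2 t.β = ∑ i ∈ t.G, i ∧ (∀ j ∈ t.β, s.mc ≤ j ∧ j < t.mc) ∧
    s.mc ≤ t.mc ∧ t.β.Nonempty with hR
  have hex : ∀ s, ∃ t, R s t := by
    intro s
    obtain ⟨G, hGF, hGne, hGgt, hGdvd⟩ := exists_block hFinf s.gc s.mc
    set x := ∑ i ∈ G, i with hx
    have hxpos : 0 < x := by
      obtain ⟨i, hi⟩ := hGne
      have h1 : 0 < i := by have := hGgt i hi; omega
      have : i ≤ x := Finset.single_le_sum (fun i _ => Nat.zero_le i) hi
      omega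
    set t' := x / 2^(s.mc) with ht'
    have hxt : 2^(s.mc) * t' = x := Nat.mul_div_cancel' hGdvd
    set β : Finset ℕ := (bits t').image (· + s.mc) with hβ
    have hβbits : β = bits x := by rw [hβ, ← hxt, bits_shift]
    have hsigβ : sig pow2 β = x := by rw [hβbits, sig_bits]
    have ht'pos : 0 < t' := by
      by_contra h
      have h0 : t' = 0 := Nat.eq_zero_of_not_pos h
      rw [h0, mul_zero] at hxt
      rw [← hxt] at hxpos
      exact lt_irrefl 0 hxpos
    have hβne : β.Nonempty := (bits_nonempty ht'pos).image _
    refine ⟨⟨G, β, G.sup id, max s.mc ((β.sup id) + 1)⟩, hGF, hGne, ?_, hsigβ, ?_, ?_, hβne⟩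
    · intro i hi
      exact ⟨hGgt i hi, Finset.le_sup (f := id) hi⟩
    · intro j hj
      simp only [hβ, Finset.mem_image] at hj
      obtain ⟨i, hi, rfl⟩ := hj
      constructor
      · omega
      · have : i + s.mc ≤ β.sup id := Finset.le_sup (f := id) (by rw [hβ]; exact Finset.mem_image_of_mem _ hi)
        simp only []
        omega
    · simp only []; omega
  set sq := chainSeq R hex ⟨∅, ∅, 0, 0⟩ with hsq
  have hspec : ∀ k, R (sq k) (sq (k+1)) := chainSeq_spec R hex _
  -- monotone cuts
  have hmcm : ∀ j k, j ≤ k → (sq j).mc ≤ (sq k).mc := by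
    intro j k hjk
    induction k with
    | zero => have : j = 0 := by omega
              rw [this]
    | succ k ih =>
      rcases Nat.eq_or_lt_of_le hjk with h | h
      · rw [h]
      · exact le_trans (ih (by omega)) (hspec k).2.2.2.2.2.1
  have hgcm : ∀ k, (sq k).gc ≤ (sq (k+1)).gc := by
    intro k
    obtain ⟨i, hi⟩ := (hspec k).2.1
    have := (hspec k).2.2.1 i hi
    omega
  have hgcmono : ∀ j k, j ≤ k → (sq j).gc ≤ (sq k).gc := by
    intro j k hjk
    induction k with
    | zero => have : j = 0 := by omega
              rw [this]
    | succ k ih =>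
      rcases Nat.eq_or_lt_of_le hjk with h | h
      · rw [h]
      · exact le_trans (ih (by omega)) (hgcm k)
  -- pairwise disjointness
  have hβdisj : ∀ j k, j < k → Disjoint (sq (j+1)).β (sq (k+1)).β := by
    intro j k hjk
    apply Finset.disjoint_left.mpr
    intro i hij hik
    have h1 := ((hspec j).2.2.2.2.1 i hij).2
    have h2 := ((hspec k).2.2.2.2.1 i hik).1
    have h3 : (sq (j+1)).mc ≤ (sq k).mc := hmcm _ _ (by omega)
    omega
  have hGdisj : ∀ j k, j < k → Disjoint (sq (j+1)).G (sq (k+1)).G := by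
    intro j k hjk
    apply Finset.disjoint_left.mpr
    intro i hij hik
    have h1 := ((hspec j).2.2.1 i hij).2
    have h2 := ((hspec k).2.2.1 i hik).1
    have h3 : (sq (j+1)).gc ≤ (sq k).gc := hgcmono _ _ (by omega)
    omega
  set w : ℕ → ℕ := fun k => sig (dd c) (sq (k+1)).β with hw
  have hwinj : Function.Injective w := by
    intro j k hjk
    by_contra hne
    have hβeq : (sq (j+1)).β = (sq (k+1)).β := sig_inj hdd1 hjk
    obtain ⟨i, hi⟩ := (hspec j).2.2.2.2.2.2
    rcases Nat.lt_or_ge j k with h | h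
    · exact Finset.disjoint_left.mp (hβdisj j k h) hi (hβeq ▸ hi)
    · have h' : k < j := by omega
      exact Finset.disjoint_left.mp (hβdisj k j h') (hβeq ▸ hi) hi
  refine ⟨Set.range w, Set.infinite_range_of_injective hwinj, ?_⟩
  rintro v ⟨V, hVsub, hVne, hVsum⟩
  obtain ⟨K, hKimg, hKne⟩ := finset_pullback hwinj V hVsub
  have hKne' := hKne hVne
  set D : Finset ℕ := K.biUnion (fun k => (sq (k+1)).β) with hD
  set X : Finset ℕ := K.biUnion (fun k => (sq (k+1)).G) with hX
  have hβpd : (↑K : Set ℕ).PairwiseDisjoint (fun k => (sq (k+1)).β) := by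
    intro j _ k _ hjk
    rcases Nat.lt_or_ge j k with h | h
    · exact hβdisj j k h
    · exact (hβdisj k j (by omega)).symm
  have hGpd : (↑K : Set ℕ).PairwiseDisjoint (fun k => (sq (k+1)).G) := by
    intro j _ k _ hjk
    rcases Nat.lt_or_ge j k with h | h
    · exact hGdisj j k h
    · exact (hGdisj k j (by omega)).symm
  have hvD : v = sig (dd c) D := by
    rw [← hVsum, ← hKimg, Finset.sum_image (fun p _ q _ h => hwinj h), hD, sig,
      Finset.sum_biUnion hβpd]
    exact Finset.sum_congr rfl (fun k _ => rfl)
  set xs := ∑ i ∈ X, i with hxs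
  have hxsD : sig pow2 D = xs := by
    rw [hD, sig, Finset.sum_biUnion hβpd, hxs, hX, Finset.sum_biUnion hGpd]
    apply Finset.sum_congr rfl
    intro k _
    exact (hspec k).2.2.2.1
  have hxsE : xs ∈ E := by
    apply hFS
    refine ⟨X, ?_, ?_, rfl⟩
    · rw [hX]
      intro i hi
      simp only [Finset.coe_biUnion, Set.mem_iUnion, Finset.mem_coe] at hi
      obtain ⟨k, _, hik⟩ := hi
      exact (hspec k).1 hik
    · obtain ⟨k, hk⟩ := hKne'
      obtain ⟨i, hi⟩ := (hspec k).2.1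
      exact ⟨i, Finset.mem_biUnion.mpr ⟨k, hk, hi⟩⟩
  refine ⟨xs, hxsE, ?_⟩
  rw [psi, bits_eq hxsD, ← hvD]
end BD

lemma psi_image_small {c : ℕ → ℕ}
    (hdd1 : ∀ k, sig (dd c) (Finset.range k) < dd c k)
    (hdd2 : ∀ k, 2 * sig (dd c) (Finset.range k) < dd c k)
    {E Y : Set ℕ} (hY : Y.Infinite) (hYFS : FS Y ⊆ psi c '' E) :
    ∃ E' : Set ℕ, E'.Infinite ∧ FS E' ⊆ E := by
  classical
  have hYsub : Y ⊆ psi c '' E := by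
    intro y hy
    exact hYFS ⟨{y}, by simpa using hy, Finset.singleton_nonempty y, by simp⟩
  set e : ℕ → ℕ := fun y => if h : y ∈ psi c '' E then h.choose else 0 with he
  have heprop : ∀ y ∈ Y, e y ∈ E ∧ psi c (e y) = y := by
    intro y hy
    have h := hYsub hy
    simp only [he, dif_pos h]
    obtain ⟨hx, hx2⟩ := h.choose_spec
    exact ⟨hx, hx2⟩
  have hdisj : ∀ y ∈ Y, ∀ y' ∈ Y, y ≠ y' → Disjoint (bits (e y)) (bits (e y')) := by
    intro y hy y' hy' hne
    have hsum : y + y' ∈ FS Y := by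
      refine ⟨{y, y'}, ?_, ⟨y, by simp⟩, ?_⟩
      · intro x hx
        simp only [Finset.coe_insert, Finset.coe_singleton, Set.mem_insert_iff,
          Set.mem_singleton_iff] at hx
        rcases hx with rfl | rfl
        · exact hy
        · exact hy'
      · exact Finset.sum_pair hne
    obtain ⟨x, _, hx2⟩ := hYFS hsum
    have heq : sig (dd c) (bits (e y)) + sig (dd c) (bits (e y')) = sig (dd c) (bits x) := by
      have h1 := (heprop y hy).2
      have h2 := (heprop y' hy').2
      simp only [psi] at h1 h2 hx2
      rw [h1, h2, hx2]
    obtain ⟨hint, _⟩ := sig_two hdd2 heq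
    exact Finset.disjoint_iff_inter_eq_empty.mpr hint
  have key : ∀ G : Finset ℕ, ↑G ⊆ Y → G.Nonempty → ∑ y ∈ G, e y ∈ E := by
    intro G hGY hGne
    have htFS : ∑ y ∈ G, y ∈ FS Y := ⟨G, hGY, hGne, rfl⟩
    obtain ⟨x, hxE, hx2⟩ := hYFS htFS
    have hpd : (↑G : Set ℕ).PairwiseDisjoint (fun y => bits (e y)) := by
      intro a ha b hb hab
      exact hdisj a (hGY ha) b (hGY hb) hab
    have hbx : sig (dd c) (bits x) = sig (dd c) (G.biUnion (fun y => bits (e y))) := by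
      simp only [psi] at hx2
      rw [hx2, sig, Finset.sum_biUnion hpd]
      apply Finset.sum_congr rfl
      intro y hyG
      have h3 := (heprop y (hGY hyG)).2
      simp only [psi] at h3
      exact h3.symm
    have hbits : bits x = G.biUnion (fun y => bits (e y)) := sig_inj hdd1 hbx
    have hxval : x = ∑ y ∈ G, e y := by
      have h1 : sig pow2 (bits x) = x := sig_bits x
      rw [hbits, sig, Finset.sum_biUnion hpd] at h1
      rw [← h1]
      apply Finset.sum_congr rfl
      intro y hyG
      exact sig_bits (e y)
    rw [← hxval]
    exact hxE
  have hinjOn : Set.InjOn e Y := by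
    intro a ha b hb hab
    have h1 := (heprop a ha).2
    have h2 := (heprop b hb).2
    rw [← h1, ← h2, hab]
  refine ⟨e '' Y, Set.Infinite.image hinjOn hY, ?_⟩
  rintro v ⟨V, hVsub, hVne, hVsum⟩
  set r : ℕ → ℕ := fun x => if h : x ∈ e '' Y then h.choose else 0 with hr
  have hrprop : ∀ x ∈ e '' Y, r x ∈ Y ∧ e (r x) = x := by
    intro x hx
    simp only [hr, dif_pos hx]
    obtain ⟨h1, h2⟩ := hx.choose_spec
    exact ⟨h1, h2⟩
  set G : Finset ℕ := V.image r with hG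
  have hGY : ↑G ⊆ Y := by
    intro y hy
    simp only [hG, Finset.coe_image, Set.mem_image, Finset.mem_coe] at hy
    obtain ⟨x, hx, rfl⟩ := hy
    exact (hrprop x (hVsub hx)).1
  have hGimg : G.image e = V := by
    rw [hG, Finset.image_image]
    calc V.image (e ∘ r) = V.image id :=
      Finset.image_congr (fun x hx => (hrprop x (hVsub hx)).2)
      _ = V := Finset.image_id
  have hGne : G.Nonempty := hVne.image r
  have hsum : ∑ y ∈ G, e y = v := by
    rw [← hVsum, ← hGimg]
    rw [Finset.sum_image (fun a ha b hb h => hinjOn (hGY ha) (hGY hb) h)]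
  rw [← hsum]
  exact key G hGY hGne

-- finite modification lemmas
lemma hindman_notin_diff {X S : Set ℕ} (hS : S.Finite) (h : X ∉ HindmanIdeal) :
    X \ S ∉ HindmanIdeal := by
  intro hd
  apply h
  apply hindman_sub (hindman_union hd (hindman_finite hS))
  intro x hx
  by_cases hxS : x ∈ S
  · exact Or.inr hxS
  · exact Or.inl ⟨hx, hxS⟩

lemma hindman_notin_mono {X X' : Set ℕ} (h : X ∉ HindmanIdeal) (hsub : X ⊆ X') :
    X' ∉ HindmanIdeal := fun h' => h (hindman_sub h' hsub)

-- restr lemmas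
lemma restr_univ (I : Set (Set ℕ)) : restr I Set.univ = I := by
  ext C
  constructor
  · rintro ⟨B, hB, rfl⟩
    rwa [Set.inter_univ]
  · intro hC
    exact ⟨C, hC, (Set.inter_univ C).symm⟩

lemma mem_restr_iff {A C : Set ℕ} (hCA : C ⊆ A) :
    C ∈ restr HindmanIdeal A ↔ C ∈ HindmanIdeal := by
  constructor
  · rintro ⟨B, hB, rfl⟩
    exact hindman_sub hB Set.inter_subset_left
  · intro hC
    exact ⟨C, hC, (Set.inter_eq_left.mpr hCA).symm⟩

section Main

variable {A : Set ℕ} {c : ℕ → ℕ}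

/-- the injection `u` -/
noncomputable def uu (c : ℕ → ℕ) : ℕ → ℕ := fun n => if n = 0 then c 0 else psi c n

lemma psi_pos_gt {n : ℕ} (hmono : StrictMono c) (hn : 0 < n) : c 0 < psi c n := by
  obtain ⟨j, hj⟩ := bits_nonempty hn
  have h1 : dd c j ≤ psi c n := Finset.single_le_sum (fun i _ => Nat.zero_le _) hj
  have h2 : c 0 < c (j + 1) := hmono (by omega)
  simp only [dd] at h1
  simp only [psi] at *
  omega

lemma uu_inj (hmono : StrictMono c) (hdd1 : ∀ k, sig (dd c) (Finset.range k) < dd c k) :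
    Function.Injective (uu c) := by
  have hpsiinj : ∀ m n, psi c m = psi c n → m = n := by
    intro m n h
    have := sig_inj hdd1 h
    rw [← sig_bits m, ← sig_bits n, this]
  intro m n hmn
  simp only [uu] at hmn
  by_cases hm : m = 0 <;> by_cases hn : n = 0
  · rw [hm, hn]
  · exfalso
    rw [if_pos hm, if_neg hn] at hmn
    have := psi_pos_gt hmono (Nat.pos_of_ne_zero hn)
    omega
  · exfalso
    rw [if_neg hm, if_pos hn] at hmn
    have := psi_pos_gt hmono (Nat.pos_of_ne_zero hm)
    omega
  · rw [if_neg hm, if_neg hn] at hmn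
    exact hpsiinj _ _ hmn

lemma uu_mem (hmono : StrictMono c) (hcB : ∀ k, c k ∈ A) (hFS : FS (Set.range c) ⊆ A) :
    ∀ n, uu c n ∈ A := by
  intro n
  by_cases hn : n = 0
  · simp only [uu, if_pos hn]
    exact hcB 0
  · simp only [uu, if_neg hn]
    apply hFS
    refine ⟨(bits n).image (fun i => c (i+1)), ?_, (bits_nonempty (Nat.pos_of_ne_zero hn)).image _, ?_⟩
    · intro x hx
      simp only [Finset.coe_image, Set.mem_image, Finset.mem_coe] at hx
      obtain ⟨i, _, rfl⟩ := hx
      exact ⟨i + 1, rfl⟩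
    · rw [Finset.sum_image (fun a _ b _ h => by
        have := hmono.injective h; omega)]
      rfl

/-- bi-invariance of `uu` -/
lemma uu_biinv (hmono : StrictMono c)
    (hdd1 : ∀ k, sig (dd c) (Finset.range k) < dd c k)
    (hdd2 : ∀ k, 2 * sig (dd c) (Finset.range k) < dd c k) :
    ∀ E : Set ℕ, uu c '' E ∈ HindmanIdeal ↔ E ∈ HindmanIdeal := by
  intro E
  constructor
  · -- contrapositive: E ∉ H → u''E ∉ H
    intro hu
    by_contra hE
    obtain ⟨F, hFinf, hFFS⟩ := not_mem_hindman_iff.mp hE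
    set F' := F \ {0} with hF'
    have hF'inf : F'.Infinite := hFinf.diff (Set.finite_singleton 0)
    have hF'pos : ∀ x ∈ F', 0 < x := by
      rintro x ⟨_, hx⟩
      simp only [Set.mem_singleton_iff] at hx
      omega
    have hFS' : FS F' ⊆ E \ {0} := by
      intro m hm
      refine ⟨hFFS (FS_mono Set.diff_subset hm), ?_⟩
      simp only [Set.mem_singleton_iff]
      have := FS_pos hF'pos hm
      omega
    obtain ⟨W, hWinf, hWFS⟩ := psi_image_large hdd1 hF'inf hFS'
    have hsubu : psi c '' (E \ {0}) ⊆ uu c '' E := by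
      rintro y ⟨x, ⟨hxE, hx0⟩, rfl⟩
      simp only [Set.mem_singleton_iff] at hx0
      exact ⟨x, hxE, by simp only [uu, if_neg hx0]⟩
    exact (not_mem_hindman_iff.mpr ⟨W, hWinf, hWFS.trans hsubu⟩) hu
  · intro hE
    by_contra hu
    have hdiff : uu c '' E \ {c 0} ∉ HindmanIdeal :=
      hindman_notin_diff (Set.finite_singleton _) hu
    have hsub : uu c '' E \ {c 0} ⊆ psi c '' (E \ {0}) := by
      rintro y ⟨⟨x, hxE, rfl⟩, hy0⟩
      simp only [Set.mem_singleton_iff] at hy0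
      have hx0 : x ≠ 0 := by
        intro h
        apply hy0
        simp only [uu, if_pos h]
      exact ⟨x, ⟨hxE, hx0⟩, by simp only [uu, if_neg hx0]⟩
    have hpsi : psi c '' (E \ {0}) ∉ HindmanIdeal := hindman_notin_mono hdiff hsub
    obtain ⟨Y, hYinf, hYFS⟩ := not_mem_hindman_iff.mp hpsi
    obtain ⟨E', hE'inf, hE'FS⟩ := psi_image_small hdd1 hdd2 hYinf hYFS
    exact hE E' hE'inf (hE'FS.trans Set.diff_subset)

end Main

section SB

def ZZ (u : ℕ → ℕ) (A : Set ℕ) : Set ℕ := ⋃ n, u^[n] '' (Set.univ \ A)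

open Classical in
noncomputable def hh (u : ℕ → ℕ) (A : Set ℕ) : ℕ → ℕ :=
  fun x => if x ∈ ZZ u A then u x else x

lemma hh_of_mem {u : ℕ → ℕ} {A : Set ℕ} {x : ℕ} (hx : x ∈ ZZ u A) : hh u A x = u x := by
  simp only [hh, if_pos hx]

lemma hh_of_not_mem {u : ℕ → ℕ} {A : Set ℕ} {x : ℕ} (hx : x ∉ ZZ u A) : hh u A x = x := by
  simp only [hh, if_neg hx]

lemma ZZ_closed (u : ℕ → ℕ) (A : Set ℕ) {x : ℕ} (hx : x ∈ ZZ u A) : u x ∈ ZZ u A := by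
  obtain ⟨_, ⟨n, rfl⟩, y, hy, rfl⟩ := hx
  exact ⟨_, ⟨n + 1, rfl⟩, y, hy, Function.iterate_succ_apply' u n y⟩

lemma ZZ_out (u : ℕ → ℕ) (A : Set ℕ) {x : ℕ} (hx : x ∉ ZZ u A) : x ∈ A := by
  by_contra h
  exact hx ⟨_, ⟨0, rfl⟩, x, ⟨trivial, h⟩, rfl⟩

lemma ZZ_surj (u : ℕ → ℕ) (A : Set ℕ) {y : ℕ} (hy : y ∈ ZZ u A) (hyA : y ∈ A) :
    ∃ x ∈ ZZ u A, u x = y := by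
  obtain ⟨_, ⟨n, rfl⟩, z, hz, rfl⟩ := hy
  cases n with
  | zero => exact absurd hyA hz.2
  | succ m =>
    refine ⟨u^[m] z, ⟨_, ⟨m, rfl⟩, z, hz, rfl⟩, ?_⟩
    exact (Function.iterate_succ_apply' u m z).symm

lemma hh_mem {u : ℕ → ℕ} {A : Set ℕ} (humem : ∀ n, u n ∈ A) (x : ℕ) : hh u A x ∈ A := by
  by_cases hx : x ∈ ZZ u A
  · rw [hh_of_mem hx]; exact humem x
  · rw [hh_of_not_mem hx]; exact ZZ_out u A hx

lemma hh_inj {u : ℕ → ℕ} {A : Set ℕ} (huinj : Function.Injective u) :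
    Function.Injective (hh u A) := by
  intro x y hxy
  by_cases hx : x ∈ ZZ u A <;> by_cases hy : y ∈ ZZ u A
  · rw [hh_of_mem hx, hh_of_mem hy] at hxy; exact huinj hxy
  · rw [hh_of_mem hx, hh_of_not_mem hy] at hxy
    exact absurd (hxy ▸ ZZ_closed u A hx) hy
  · rw [hh_of_not_mem hx, hh_of_mem hy] at hxy
    exact absurd (hxy.symm ▸ ZZ_closed u A hy) hx
  · rw [hh_of_not_mem hx, hh_of_not_mem hy] at hxy; exact hxy

lemma hh_surj {u : ℕ → ℕ} {A : Set ℕ} {y : ℕ} (hy : y ∈ A) : ∃ x, hh u A x = y := by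
  by_cases hyZ : y ∈ ZZ u A
  · obtain ⟨x, hxZ, rfl⟩ := ZZ_surj u A hyZ hy
    exact ⟨x, hh_of_mem hxZ⟩
  · exact ⟨y, hh_of_not_mem hyZ⟩

lemma hh_preimage (u : ℕ → ℕ) (A : Set ℕ) (C : Set ℕ) :
    hh u A ⁻¹' C = (ZZ u A ∩ u ⁻¹' C) ∪ ((Set.univ \ ZZ u A) ∩ C) := by
  ext x
  simp only [Set.mem_preimage, Set.mem_union, Set.mem_inter_iff, Set.mem_diff]
  by_cases hx : x ∈ ZZ u A
  · rw [hh_of_mem hx]; simp [hx]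
  · rw [hh_of_not_mem hx]; simp [hx]

lemma hh_cond {u : ℕ → ℕ} {A : Set ℕ}
    (hubi : ∀ E : Set ℕ, u '' E ∈ HindmanIdeal ↔ E ∈ HindmanIdeal)
    (C : Set ℕ) (hCA : C ⊆ A) :
    C ∈ HindmanIdeal ↔ hh u A ⁻¹' C ∈ HindmanIdeal := by
  constructor
  · intro hC
    rw [hh_preimage]
    apply hindman_union
    · apply hindman_sub ((hubi (u ⁻¹' C)).mp ?_) Set.inter_subset_right
      exact hindman_sub hC (Set.image_preimage_subset u C)
    · exact hindman_sub hC Set.inter_subset_right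
  · intro hC
    have hcov : C ⊆ u '' (ZZ u A ∩ u ⁻¹' C) ∪ ((Set.univ \ ZZ u A) ∩ C) := by
      intro y hyC
      by_cases hyZ : y ∈ ZZ u A
      · obtain ⟨x, hxZ, rfl⟩ := ZZ_surj u A hyZ (hCA hyC)
        exact Or.inl ⟨x, ⟨hxZ, hyC⟩, rfl⟩
      · exact Or.inr ⟨⟨trivial, hyZ⟩, hyC⟩
    apply hindman_sub _ hcov
    apply hindman_union
    · apply (hubi _).mpr
      apply hindman_sub hC
      rw [hh_preimage]
      exact Set.subset_union_left
    · apply hindman_sub hC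
      rw [hh_preimage]
      exact Set.subset_union_right

end SB

lemma HF_to_pos {A : Set ℕ} (hA : A ∈ HF HindmanIdeal) : A ∉ HindmanIdeal := by
  obtain ⟨f, hbij, hcond⟩ := hA
  intro hAH
  have h1 : A ∈ restr HindmanIdeal A := ⟨A, hAH, (Set.inter_self A).symm⟩
  have h2 := (hcond A Set.Subset.rfl).mp h1
  have h3 : Set.univ ∩ f ⁻¹' A = Set.univ := by
    apply Set.eq_univ_of_forall
    intro x
    exact ⟨trivial, hbij.mapsTo trivial⟩
  rw [h3, restr_univ] at h2
  exact hindman_univ h2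

lemma pos_to_HF {A : Set ℕ} (hA : A ∉ HindmanIdeal) : A ∈ HF HindmanIdeal := by
  obtain ⟨B, hBinf, hBFS⟩ := not_mem_hindman_iff.mp hA
  obtain ⟨c, hmono, hcB, hc0, hsparse⟩ := exists_sparse_seq hBinf
  have hdd1 := dd_super1 hsparse
  have hdd2 := dd_super hsparse
  have hcA : ∀ k, c k ∈ A := fun k => hBFS (subset_FS B (hcB k))
  have hrangeFS : FS (Set.range c) ⊆ A := by
    refine (FS_mono ?_).trans hBFS
    rintro x ⟨k, rfl⟩
    exact hcB k
  set u := uu c with hu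
  have huinj : Function.Injective u := uu_inj hmono hdd1
  have humem : ∀ n, u n ∈ A := uu_mem hmono hcA hrangeFS
  have hubi := uu_biinv hmono hdd1 hdd2
  refine ⟨hh u A, ⟨fun x _ => hh_mem humem x, (hh_inj huinj).injOn, ?_⟩, ?_⟩
  · intro y hy
    obtain ⟨x, hx⟩ := hh_surj hy
    exact ⟨x, trivial, hx⟩
  · intro C hCA
    rw [Set.univ_inter, restr_univ, mem_restr_iff hCA]
    exact hh_cond hubi C hCA


/-- the Hindman ideal is a homogeneous ideal. -/
theorem stmt_5 : IsIdeal HindmanIdeal ∧ HomogIdeal HindmanIdeal := by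
  constructor
  · exact ⟨fun A B hA hBA => hindman_sub hA hBA,
      fun A B hA hB => hindman_union hA hB,
      fun A hA => hindman_finite hA,
      hindman_univ⟩
  · apply Set.eq_of_subset_of_subset
    · intro A hA
      exact HF_to_pos hA
    · intro A hA
      exact pos_to_HF hA
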